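/- Let A be a finite-dimensional self-injective k-algebra such that the left annihilator of rad(A)² is contained in rad(A)², i.e. {a ∈ A | a·rad(A)² = 0} ⊆ rad(A)² (this is the condition soc²(A) ⊆ rad(A)² and forces A to have no semisimple blocks), and let φ be a stably inner automorphism of A. Then the automorphism of the quotient algebra A/rad(A)² induced by φ is inner, i.e. there exists an invertible element u of A/rad(A)² with φ(a) + rad(A)² = u⁻¹(a + rad(A)²)u for all a ∈ A. -/

import Mathlib

universe u v w

section StablePrelude

variable {k : Type u} {A : Type v} [Field k] [Ring A] [Algebra k A]

/-- The right `A`-module `M` twisted by the algebra automorphism `φ`: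
same underlying additive group, with right action `m ·_φ a = m · φ a`. -/
def Tw (_φ : A ≃ₐ[k] A) (M : Type w) : Type w := M

/-- The identity function, viewed as a map `M → Tw φ M`. -/
def Tw.of (φ : A ≃ₐ[k] A) {M : Type w} (m : M) : Tw φ M := m

instance (φ : A ≃ₐ[k] A) (M : Type w) [inst : AddCommGroup M] : AddCommGroup (Tw φ M) := inst

instance (φ : A ≃ₐ[k] A) (M : Type w) [AddCommGroup M] [Module Aᵐᵒᵖ M] :
    Module Aᵐᵒᵖ (Tw φ M) :=
  Module.compHom M (RingHom.op φ.toRingEquiv.toRingHom)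

/-- A right-module map `f : M → N` is also `A`-linear as a map `M_φ → N_φ`
(with the same underlying function). -/
def twMap (φ : A ≃ₐ[k] A) {M N : Type w} [AddCommGroup M] [Module Aᵐᵒᵖ M]
    [AddCommGroup N] [Module Aᵐᵒᵖ N] (f : M →ₗ[Aᵐᵒᵖ] N) :
    Tw φ M →ₗ[Aᵐᵒᵖ] Tw φ N where
  toFun m := Tw.of φ (f m)
  map_add' := f.map_add
  map_smul' r m := f.map_smul (RingHom.op φ.toRingEquiv.toRingHom r) m

/-- `f` factors through a projective module. -/
def FactorsThroughProjective {R : Type*} [Ring R] {M N : Type w}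
    [AddCommGroup M] [Module R M] [AddCommGroup N] [Module R N] (f : M →ₗ[R] N) : Prop :=
  ∃ (P : Type w) (_ : AddCommGroup P) (_ : Module R P),
    Module.Projective R P ∧ ∃ (g : M →ₗ[R] P) (h : P →ₗ[R] N), f = h ∘ₗ g

/-- An automorphism `φ` of `A` is *stably inner* if restriction of scalars along `φ`
induces a functor on the stable category of finitely generated right `A`-modules that is
isomorphic to the identity functor: there is a family of maps `η_M : M → M_φ` that is
natural up to maps factoring through projectives and consists of stable isomorphisms. -/
def StablyInner (φ : A ≃ₐ[k] A) : Prop :=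
  ∃ η : ∀ (M : Type v) (_ : AddCommGroup M) (_ : Module Aᵐᵒᵖ M) (_ : Module.Finite Aᵐᵒᵖ M),
      M →ₗ[Aᵐᵒᵖ] Tw φ M,
    (∀ (M : Type v) (iM : AddCommGroup M) (mM : Module Aᵐᵒᵖ M) (fM : Module.Finite Aᵐᵒᵖ M)
        (N : Type v) (iN : AddCommGroup N) (mN : Module Aᵐᵒᵖ N) (fN : Module.Finite Aᵐᵒᵖ N)
        (f : M →ₗ[Aᵐᵒᵖ] N),
        FactorsThroughProjective (η N iN mN fN ∘ₗ f - twMap φ f ∘ₗ η M iM mM fM)) ∧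
    (∀ (M : Type v) (iM : AddCommGroup M) (mM : Module Aᵐᵒᵖ M) (fM : Module.Finite Aᵐᵒᵖ M),
        ∃ ζ : Tw φ M →ₗ[Aᵐᵒᵖ] M,
          FactorsThroughProjective (ζ ∘ₗ η M iM mM fM - LinearMap.id) ∧
          FactorsThroughProjective (η M iM mM fM ∘ₗ ζ - LinearMap.id))

end StablePrelude


section AuxProof

open MulOpposite

/-- Any map factoring through a projective is zero, given suitable annihilation
conditions coming from `soc² ⊆ rad²`. -/
theorem pzero_aux {A : Type v} [Ring A] (J2 : Ideal A)
    (hsoc : ∀ a : A, (∀ x ∈ J2, a * x = 0) → a ∈ J2)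
    {M N : Type v} [AddCommGroup M] [Module Aᵐᵒᵖ M] [AddCommGroup N] [Module Aᵐᵒᵖ N]
    (f : M →ₗ[Aᵐᵒᵖ] N) (hf : FactorsThroughProjective f)
    (m : M) (hgen : ∀ x : M, ∃ c : A, x = op c • m)
    (hm : ∀ j ∈ J2, op j • m = 0)
    (hN : ∀ (y : N), ∀ j ∈ J2, op j • y = 0) :
    f = 0 := by
  obtain ⟨P, iP, mP, hP, g, h, hfgh⟩ := hf
  obtain ⟨s, hs⟩ := hP.out
  set T : (P →₀ Aᵐᵒᵖ) →ₗ[Aᵐᵒᵖ] N := h ∘ₗ Finsupp.linearCombination Aᵐᵒᵖ id with hT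
  set x : P →₀ Aᵐᵒᵖ := s (g m) with hxdef
  have hx : ∀ j ∈ J2, op j • x = 0 := by
    intro j hj
    rw [hxdef, ← map_smul, ← map_smul, hm j hj, map_zero, map_zero]
  have hcoef : ∀ p : P, (x p).unop ∈ J2 := by
    intro p
    apply hsoc
    intro j hj
    have h1 := congrFun (congrArg (fun z : P →₀ Aᵐᵒᵖ => (z : P → Aᵐᵒᵖ)) (hx j hj)) p
    simp only [Finsupp.coe_smul, Pi.smul_apply, Finsupp.coe_zero, Pi.zero_apply,
      smul_eq_mul] at h1
    have : op ((x p).unop * j) = (0 : Aᵐᵒᵖ) := by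
      rw [op_mul, op_unop, h1]
    exact op_injective this
  have hfm : f m = 0 := by
    have e1 : f m = T x := by
      rw [hfgh]
      simp only [LinearMap.comp_apply, hT, hxdef]
      rw [hs (g m)]
    rw [e1]
    have e2 : x = x.sum fun p r => Finsupp.single p r := (Finsupp.sum_single x).symm
    rw [e2, map_finsuppSum]
    apply Finset.sum_eq_zero
    intro p _
    show T (Finsupp.single p (x p)) = 0
    have h1 : Finsupp.single p (x p) = (x p) • Finsupp.single p (1 : Aᵐᵒᵖ) := by
      rw [Finsupp.smul_single, smul_eq_mul, mul_one]
    rw [h1, map_smul, ← op_unop (x p)]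
    exact hN _ _ (hcoef p)
  ext y
  obtain ⟨c, rfl⟩ := hgen y
  rw [map_smul, hfm, smul_zero]
  rfl

end AuxProof

/-- If `A` is a finite-dimensional self-injective algebra with
`soc²(A) ⊆ rad(A)²` (i.e. the left annihilator of `rad(A)²` is contained in `rad(A)²`)
and `φ` is stably inner, then `φ` induces an inner automorphism of `A/rad(A)²`. -/
theorem stablyInner_inner_mod_rad_sq
    {k : Type u} {A : Type v} [Field k] [Ring A] [Algebra k A] [FiniteDimensional k A]
    (hselfinj : Module.Injective Aᵐᵒᵖ A)
    (φ : A ≃ₐ[k] A) (hφ : StablyInner φ)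
    (J2 : Ideal A)
    (hJ2 : J2 = Submodule.span A {x : A | ∃ a ∈ Ideal.jacobson (⊥ : Ideal A),
      ∃ b ∈ Ideal.jacobson (⊥ : Ideal A), x = a * b})
    (hsoc : ∀ a : A, (∀ x ∈ J2, a * x = 0) → a ∈ J2) :
    ∃ u v : A, u * v - 1 ∈ J2 ∧ v * u - 1 ∈ J2 ∧ ∀ a : A, v * φ a - a * v ∈ J2 := by
  classical
  open MulOpposite in
  obtain ⟨η0, hnat, hiso⟩ := hφ
  set J := Ideal.jacobson (⊥ : Ideal A) with hJdef
  -- J is stable under right multiplication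
  have hJr : ∀ x ∈ J, ∀ y : A, x * y ∈ J := by
    intro x hx y
    exact Ideal.mul_mem_right y _ hx
  -- algebra automorphisms preserve J
  have hψJ : ∀ (ψ : A ≃ₐ[k] A), ∀ x ∈ J, ψ x ∈ J := by
    intro ψ x hx
    have hmap : Ideal.map (ψ : A →+* A) J = J := by
      rw [hJdef, Ideal.map_jacobson_of_bijective ψ.bijective, Ideal.map_bot]
    rw [← hmap]
    exact Ideal.mem_map_of_mem _ hx
  -- J2 is stable under right multiplication
  have hJ2r : ∀ x ∈ J2, ∀ y : A, x * y ∈ J2 := by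
    intro x hx y
    rw [hJ2] at hx ⊢
    induction hx using Submodule.span_induction with
    | mem z hz =>
      obtain ⟨a, ha, b, hb, rfl⟩ := hz
      rw [mul_assoc]
      exact Submodule.subset_span ⟨a, ha, b * y, hJr b hb y, rfl⟩
    | zero => rw [zero_mul]; exact Submodule.zero_mem _
    | add z w hz hw ihz ihw => rw [add_mul]; exact Submodule.add_mem _ ihz ihw
    | smul c z hz ihz => rw [smul_eq_mul, mul_assoc]; exact Submodule.smul_mem _ c ihz
  -- algebra automorphisms preserve J2
  have hψJ2 : ∀ (ψ : A ≃ₐ[k] A), ∀ x ∈ J2, ψ x ∈ J2 := by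
    intro ψ x hx
    rw [hJ2] at hx ⊢
    induction hx using Submodule.span_induction with
    | mem z hz =>
      obtain ⟨a, ha, b, hb, rfl⟩ := hz
      rw [map_mul]
      exact Submodule.subset_span ⟨ψ a, hψJ ψ a ha, ψ b, hψJ ψ b hb, rfl⟩
    | zero => rw [map_zero]; exact Submodule.zero_mem _
    | add z w hz hw ihz ihw => rw [map_add]; exact Submodule.add_mem _ ihz ihw
    | smul c z hz ihz =>
      rw [smul_eq_mul, map_mul]
      have : ψ c * ψ z = ψ c • ψ z := rfl
      rw [this]
      exact Submodule.smul_mem _ _ ihz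
  -- the right ideal structure
  set p : Submodule Aᵐᵒᵖ A :=
    { carrier := J2
      add_mem' := fun ha hb => J2.add_mem ha hb
      zero_mem' := J2.zero_mem
      smul_mem' := fun c x hx => hJ2r x hx c.unop } with hpdef
  have hpmem : ∀ x : A, x ∈ p ↔ x ∈ J2 := fun x => Iff.rfl
  set M := A ⧸ p with hMdef
  set mk : A →ₗ[Aᵐᵒᵖ] M := p.mkQ with hmkdef
  have hmk_surj : Function.Surjective mk := Submodule.mkQ_surjective p
  have hmk_zero : ∀ x : A, mk x = 0 ↔ x ∈ J2 := fun x =>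
    (Submodule.Quotient.mk_eq_zero p)
  have hmk_eq : ∀ x y : A, mk x = mk y ↔ x - y ∈ J2 := fun x y =>
    Submodule.Quotient.eq p
  -- basic smul computations
  have E0 : ∀ (c x : A), (op c • x : A) = x * c := fun c x => rfl
  have E1 : ∀ c : A, (op c • mk 1 : M) = mk c := by
    intro c
    rw [← map_smul, E0, one_mul]
  have Etw : ∀ (a : A) (y : M),
      (op a • (Tw.of φ y) : Tw φ M) = Tw.of φ (op (φ a) • y) := fun a y => rfl
  have EtwM : ∀ (f : M →ₗ[Aᵐᵒᵖ] M) (y : M),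
      twMap φ f (Tw.of φ y) = Tw.of φ (f y) := fun f y => rfl
  have Etw_zero : (Tw.of φ (0 : M) : Tw φ M) = 0 := rfl
  have Etw_inj : ∀ y z : M, Tw.of φ y = Tw.of φ z → y = z := fun y z h => h
  -- finiteness
  haveI fA : Module.Finite Aᵐᵒᵖ A := by
    constructor
    rw [Submodule.fg_def]
    refine ⟨{1}, Set.finite_singleton 1, eq_top_iff.mpr fun x _ => ?_⟩
    have : x = op x • (1 : A) := by rw [E0, one_mul]
    rw [this]
    exact Submodule.smul_mem _ _ (Submodule.subset_span rfl)
  haveI fM : Module.Finite Aᵐᵒᵖ M := Module.Finite.of_surjective mk hmk_surj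
  -- annihilation facts
  have hm1 : ∀ j ∈ J2, (op j • mk 1 : M) = 0 := by
    intro j hj; rw [E1]; exact (hmk_zero j).mpr hj
  have hNM : ∀ (y : M), ∀ j ∈ J2, op j • y = 0 := by
    intro y j hj
    obtain ⟨x, rfl⟩ := hmk_surj y
    rw [← map_smul, E0]
    exact (hmk_zero _).mpr (J2.mul_mem_left x hj)
  have hgenM : ∀ x : M, ∃ c : A, x = op c • mk 1 := by
    intro x
    obtain ⟨c, rfl⟩ := hmk_surj x
    exact ⟨c, (E1 c).symm⟩
  -- the twisted module versions
  have hsurjTw : ∀ y : Tw φ M, ∃ x : M, y = Tw.of φ x := fun y => ⟨y, rfl⟩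
  have hNTw : ∀ (y : Tw φ M), ∀ j ∈ J2, op j • y = 0 := by
    intro y j hj
    exact hNM (show M from y) (φ j) (hψJ2 φ j hj)
  have hgenTw : ∀ y : Tw φ M, ∃ c : A, y = op c • (Tw.of φ (mk 1)) := by
    intro y
    obtain ⟨c, hc⟩ := hmk_surj (show M from y)
    refine ⟨φ.symm c, ?_⟩
    rw [Etw, E1, AlgEquiv.apply_symm_apply]
    exact hc.symm
  have hmTw : ∀ j ∈ J2, (op j • (Tw.of φ (mk 1)) : Tw φ M) = 0 := by
    intro j hj
    rw [Etw, E1, ← Etw_zero]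
    congr 1
    exact (hmk_zero _).mpr (hψJ2 φ j hj)
  set η := η0 M inferInstance inferInstance fM with hηdef
  -- left multiplication maps
  have lmul_exists : ∀ b : A, ∃ f : M →ₗ[Aᵐᵒᵖ] M, ∀ x : A, f (mk x) = mk (b * x) := by
    intro b
    have hb : ∀ (c x : A), b * (op c • x) = op c • (b * x) := by
      intro c x; rw [E0, E0, mul_assoc]
    set f0 : A →ₗ[Aᵐᵒᵖ] A :=
      { toFun := fun x => b * x
        map_add' := fun x y => mul_add b x y
        map_smul' := fun r x => by
          show b * (r • x) = (RingHom.id Aᵐᵒᵖ) r • (b * x)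
          rw [RingHom.id_apply, MulOpposite.smul_eq_mul_unop,
            MulOpposite.smul_eq_mul_unop, mul_assoc] } with hf0
    have hle : p ≤ p.comap f0 := by
      intro x hx
      exact J2.mul_mem_left b hx
    refine ⟨Submodule.mapQ p p f0 hle, fun x => ?_⟩
    show (Submodule.mapQ p p f0 hle) (Submodule.Quotient.mk x) = Submodule.Quotient.mk (b * x)
    rw [Submodule.mapQ_apply]
    rfl
  -- naturality gives bimodule property
  have hnatural : ∀ (f : M →ₗ[Aᵐᵒᵖ] M) (x : M), η (f x) = twMap φ f (η x) := by
    intro f x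
    have hz := pzero_aux J2 hsoc (η ∘ₗ f - twMap φ f ∘ₗ η)
      (hnat M inferInstance inferInstance fM M inferInstance inferInstance fM f)
      (mk 1) hgenM hm1 hNTw
    have := congrFun (congrArg (fun g : M →ₗ[Aᵐᵒᵖ] Tw φ M => (g : M → Tw φ M)) hz) x
    simp only [LinearMap.sub_apply, LinearMap.comp_apply, LinearMap.zero_apply] at this
    exact sub_eq_zero.mp this
  -- the stable inverse
  obtain ⟨ζ, hζ1, hζ2⟩ := hiso M inferInstance inferInstance fM
  have hηζ : ∀ y : Tw φ M, η (ζ y) = y := by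
    intro y
    have hz := pzero_aux J2 hsoc (η ∘ₗ ζ - LinearMap.id)
      hζ2 (Tw.of φ (mk 1)) hgenTw hmTw hNTw
    have := congrFun (congrArg
      (fun g : Tw φ M →ₗ[Aᵐᵒᵖ] Tw φ M => (g : Tw φ M → Tw φ M)) hz) y
    simp only [LinearMap.sub_apply, LinearMap.comp_apply, LinearMap.id_apply,
      LinearMap.zero_apply] at this
    exact sub_eq_zero.mp this
  -- extract v
  obtain ⟨v0, hv0⟩ := hsurjTw (η (mk 1))
  obtain ⟨v, rfl⟩ := hmk_surj v0
  -- key formulas: η (mk a) = Tw.of φ (mk (v * φ a)) = Tw.of φ (mk (a * v))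
  have keyR : ∀ a : A, η (mk a) = Tw.of φ (mk (v * φ a)) := by
    intro a
    rw [← E1 a, map_smul, hv0, Etw, ← map_smul, E0]
  have keyL : ∀ a : A, η (mk a) = Tw.of φ (mk (a * v)) := by
    intro a
    obtain ⟨f, hf⟩ := lmul_exists a
    have h1 : mk a = f (mk 1) := by rw [hf 1, mul_one]
    rw [h1, hnatural f (mk 1), hv0, EtwM, hf v]
  -- third conclusion
  have hcomm : ∀ a : A, v * φ a - a * v ∈ J2 := by
    intro a
    have h0 := Etw_inj _ _ ((keyL a).symm.trans (keyR a))
    have h1 := (hmk_eq _ _).mp h0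
    have h2 := neg_mem h1
    rwa [neg_sub] at h2
  -- find c with η (mk c) = Tw.of φ (mk 1)
  obtain ⟨c, hc⟩ := hmk_surj (ζ (Tw.of φ (mk 1)))
  have hηc : η (mk c) = Tw.of φ (mk 1) := by rw [hc]; exact hηζ _
  have hcv : c * v - 1 ∈ J2 := by
    have := Etw_inj _ _ ((keyL c).symm.trans hηc)
    exact (hmk_eq _ _).mp this
  have hvφc : v * φ c - 1 ∈ J2 := by
    have := Etw_inj _ _ ((keyR c).symm.trans hηc)
    exact (hmk_eq _ _).mp this
  -- v * c - 1 ∈ J2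
  have hcφc : c - φ c ∈ J2 := by
    have h1 : c - φ c = -(c * (v * φ c - 1)) + (c * v - 1) * φ c := by noncomm_ring
    rw [h1]
    exact Submodule.add_mem _ (Submodule.neg_mem _ (J2.mul_mem_left c hvφc))
      (hJ2r _ hcv (φ c))
  have hvc : v * c - 1 ∈ J2 := by
    have h1 : v * c - 1 = v * (c - φ c) + (v * φ c - 1) := by noncomm_ring
    rw [h1]
    exact Submodule.add_mem _ (J2.mul_mem_left v hcφc) hvφc
  exact ⟨c, v, hcv, hvc, hcomm⟩
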